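/- Let γ be a real number. Define, for real x and t, c(x,t) = (1 − e^{−γt}·cos x)/2, p(x,t) = e^{−t}(cos x − 1), u(x,t) = e^{−t}·sin x, q(x,t) = e^{−t}, and c̃(x,t) = (e^{−γt}(sin²x − cos x) + 1)/2. Then for all real x and t: (i) u(x,t) = −∂p/∂x(x,t); (ii) ∂p/∂t(x,t) + ∂u/∂x(x,t) = q(x,t); (iii) ∂c/∂t(x,t) + u(x,t)·∂c/∂x(x,t) − γ·∂²c/∂x²(x,t) = (c̃(x,t) − c(x,t))·q(x,t). Moreover u(0,t) = u(2π,t) = 0 and ∂c/∂x(0,t) = ∂c/∂x(2π,t) = 0 for all t; c(x,0) = (1 − cos x)/2 and p(x,0) = cos x − 1; and if γ ≥ 0 then 0 ≤ c(x,t) ≤ 1 for all x and all t ≥ 0. -/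

import Mathlib

noncomputable section

namespace ExactSolution1D

/-- Concentration `c(x,t) = (1 - e^{-γt}·cos x)/2`. -/
def c (γ x t : ℝ) : ℝ := (1 - Real.exp (-(γ * t)) * Real.cos x) / 2

/-- Pressure `p(x,t) = e^{-t}(cos x - 1)`. -/
def p (x t : ℝ) : ℝ := Real.exp (-t) * (Real.cos x - 1)

/-- Darcy velocity `u(x,t) = e^{-t}·sin x`. -/
def u (x t : ℝ) : ℝ := Real.exp (-t) * Real.sin x

/-- External volumetric flow rate `q(x,t) = e^{-t}`. -/
def q (x t : ℝ) : ℝ := Real.exp (-t)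

/-- Injected concentration `c̃(x,t) = (e^{-γt}(sin²x - cos x) + 1)/2`. -/
def ctld (γ x t : ℝ) : ℝ :=
  (Real.exp (-(γ * t)) * (Real.sin x ^ 2 - Real.cos x) + 1) / 2

lemma hasDerivAt_px (x t : ℝ) :
    HasDerivAt (fun x' => p x' t) (Real.exp (-t) * (-Real.sin x)) x := by
  simpa [p] using (HasDerivAt.const_mul (Real.exp (-t))
    ((Real.hasDerivAt_cos x).sub_const 1))

lemma hasDerivAt_pt (x t : ℝ) :
    HasDerivAt (fun t' => p x t') (-Real.exp (-t) * (Real.cos x - 1)) t := by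
  have h : HasDerivAt (fun t' : ℝ => Real.exp (-t')) (-Real.exp (-t)) t := by
    simpa [Function.comp_def] using ((Real.hasDerivAt_exp (-t)).comp t ((hasDerivAt_id t).neg))
  simpa [p] using h.mul_const (Real.cos x - 1)

lemma hasDerivAt_ux (x t : ℝ) :
    HasDerivAt (fun x' => u x' t) (Real.exp (-t) * Real.cos x) x := by
  simpa [u] using (Real.hasDerivAt_sin x).const_mul (Real.exp (-t))

lemma hasDerivAt_cx (γ x t : ℝ) :
    HasDerivAt (fun x' => c γ x' t) (Real.exp (-(γ * t)) * Real.sin x / 2) x := by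
  have h : HasDerivAt (fun x' => 1 - Real.exp (-(γ * t)) * Real.cos x')
      (Real.exp (-(γ * t)) * Real.sin x) x := by
    simpa [mul_comm] using ((Real.hasDerivAt_cos x).const_mul (Real.exp (-(γ * t)))).const_sub 1
  simpa [c] using h.div_const 2

lemma deriv_cx (γ t : ℝ) :
    deriv (fun x' => c γ x' t) = fun x => Real.exp (-(γ * t)) * Real.sin x / 2 := by
  funext x; exact (hasDerivAt_cx γ x t).deriv

lemma hasDerivAt_ct (γ x t : ℝ) :
    HasDerivAt (fun t' => c γ x t') (γ * Real.exp (-(γ * t)) * Real.cos x / 2) t := by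
  have h : HasDerivAt (fun t' : ℝ => Real.exp (-(γ * t'))) (-γ * Real.exp (-(γ * t))) t := by
    simpa [mul_comm, Function.comp_def, Pi.neg_apply] using
      ((Real.hasDerivAt_exp (-(γ * t))).comp t (((hasDerivAt_id t).const_mul γ).neg))
  have h2 : HasDerivAt (fun t' => 1 - Real.exp (-(γ * t')) * Real.cos x)
      (γ * Real.exp (-(γ * t)) * Real.cos x) t := by
    simpa using (h.mul_const (Real.cos x)).const_sub 1
  simpa [c] using h2.div_const 2

/-- Example 4.1: the constructed analytical solution of the 1D compressible miscible
displacement system with `φ = κ = μ = 1`, `z₁ = z₂ = 1` and `D = γ`. -/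
theorem exact_solution_1d (γ : ℝ) :
    (∀ x t : ℝ, u x t = -(deriv (fun x' => p x' t) x)) ∧
    (∀ x t : ℝ, deriv (fun t' => p x t') t + deriv (fun x' => u x' t) x = q x t) ∧
    (∀ x t : ℝ,
      deriv (fun t' => c γ x t') t + u x t * deriv (fun x' => c γ x' t) x
        - γ * deriv (deriv (fun x' => c γ x' t)) x
        = (ctld γ x t - c γ x t) * q x t) ∧
    (∀ t : ℝ, u 0 t = 0 ∧ u (2 * Real.pi) t = 0) ∧
    (∀ t : ℝ, deriv (fun x' => c γ x' t) 0 = 0 ∧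
      deriv (fun x' => c γ x' t) (2 * Real.pi) = 0) ∧
    (∀ x : ℝ, c γ x 0 = (1 - Real.cos x) / 2) ∧
    (∀ x : ℝ, p x 0 = Real.cos x - 1) ∧
    (0 ≤ γ → ∀ x t : ℝ, 0 ≤ t → 0 ≤ c γ x t ∧ c γ x t ≤ 1) := by
  refine ⟨?_, ?_, ?_, ?_, ?_, ?_, ?_, ?_⟩
  · intro x t
    rw [(hasDerivAt_px x t).deriv]; simp [u]
  · intro x t
    rw [(hasDerivAt_pt x t).deriv, (hasDerivAt_ux x t).deriv]; simp [q]; ring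
  · intro x t
    have hxx : deriv (deriv (fun x' => c γ x' t)) x
        = Real.exp (-(γ * t)) * Real.cos x / 2 := by
      rw [deriv_cx]
      have h : HasDerivAt (fun x' => Real.exp (-(γ * t)) * Real.sin x' / 2)
          (Real.exp (-(γ * t)) * Real.cos x / 2) x := by
        simpa using (((Real.hasDerivAt_sin x).const_mul (Real.exp (-(γ * t)))).div_const 2)
      exact h.deriv
    rw [(hasDerivAt_ct γ x t).deriv, (hasDerivAt_cx γ x t).deriv, hxx]
    simp only [u, q, c, ctld]
    ring
  · intro t; constructor <;> simp [u, Real.sin_two_pi]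
  · intro t; constructor <;>
      rw [(hasDerivAt_cx γ _ t).deriv] <;> simp [Real.sin_two_pi]
  · intro x; simp [c]
  · intro x; simp [p]
  · intro hγ x t ht
    have he : Real.exp (-(γ * t)) ≤ 1 := Real.exp_le_one_iff.2 (by nlinarith)
    have he0 : 0 < Real.exp (-(γ * t)) := Real.exp_pos _
    have hc1 : -1 ≤ Real.cos x := Real.neg_one_le_cos x
    have hc2 : Real.cos x ≤ 1 := Real.cos_le_one x
    constructor <;> · simp only [c]; nlinarith

end ExactSolution1D
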